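/- The function α defined by α(x) = lim_{n→∞}( −(1/3)log n + 2/g^{[n]}(x) − n ) for x > 0, where g(x) = 1 − e^{−x}, satisfies the Abel equation α(g(x)) = α(x) + 1 for all x > 0. -/

import Mathlib

open Filter Topology

lemma log_succ_sub_log_tendsto :
    Tendsto (fun n : ℕ => Real.log (n + 1) - Real.log n) atTop (𝓝 0) := by
  have h1 : Tendsto (fun n : ℕ => ((n : ℝ) + 1) / n) atTop (𝓝 1) := by
    have := Filter.Tendsto.add_atTop (tendsto_const_nhds (x := (1:ℝ)))
      tendsto_natCast_atTop_atTop (l := atTop)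
    have h : Tendsto (fun n : ℕ => 1 + 1 / (n : ℝ)) atTop (𝓝 1) := by
      simpa using (tendsto_const_nhds (x := (1:ℝ))).add (tendsto_one_div_atTop_nhds_zero_nat)
    refine h.congr' ?_
    filter_upwards [eventually_gt_atTop 0] with n hn
    field_simp
  have h2 : Tendsto (fun n : ℕ => Real.log (((n : ℝ) + 1) / n)) atTop (𝓝 0) := by
    have := (Real.continuousAt_log (by norm_num : (1:ℝ) ≠ 0)).tendsto.comp h1
    simpa [Function.comp_def] using this
  refine h2.congr' ?_
  filter_upwards [eventually_gt_atTop 0] with n hn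
  rw [Real.log_div (by positivity) (by positivity)]

theorem fatou_walker_abel_equation (α : ℝ → ℝ)
    (hα : ∀ x : ℝ, 0 < x →
      Tendsto (fun n : ℕ =>
          -(1/3) * Real.log n + 2 / (fun y : ℝ => 1 - Real.exp (-y))^[n] x - n) atTop
        (𝓝 (α x))) :
    ∀ x : ℝ, 0 < x → α (1 - Real.exp (-x)) = α x + 1 := by
  intro x hx
  have hgx : 0 < 1 - Real.exp (-x) := by
    have : Real.exp (-x) < 1 := by
      rw [Real.exp_lt_one_iff]; linarith
    linarith
  have h1 := hα x hx
  have h2 := hα _ hgx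
  have hshift : Tendsto (fun n : ℕ =>
      -(1/3) * Real.log (n+1) + 2 / (fun y : ℝ => 1 - Real.exp (-y))^[n+1] x - (n+1)) atTop
      (𝓝 (α x)) := by
    have := h1.comp (tendsto_add_atTop_nat 1)
    refine this.congr fun n => ?_
    simp only [Function.comp_apply]
    push_cast
    ring
  have hmain : Tendsto (fun n : ℕ =>
      -(1/3) * Real.log n + 2 / (fun y : ℝ => 1 - Real.exp (-y))^[n] (1 - Real.exp (-x)) - n)
      atTop (𝓝 (α x + 1)) := by
    have hsum := (hshift.add (log_succ_sub_log_tendsto.const_mul (1/3))).add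
      (tendsto_const_nhds (x := (1:ℝ)))
    have : (α x + 1/3 * 0) + 1 = α x + 1 := by ring
    rw [this] at hsum
    refine hsum.congr fun n => ?_
    have hit : (fun y : ℝ => 1 - Real.exp (-y))^[n] (1 - Real.exp (-x))
        = (fun y : ℝ => 1 - Real.exp (-y))^[n+1] x := by
      rw [Function.iterate_succ_apply]
    rw [← hit]
    ring
  exact tendsto_nhds_unique h2 hmain
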